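/- The four planar similarities with vertices (0,0), (1/4, √3/4), (3/4, √3/4), (1,0) and signature (1,0,1) — i.e., the unique similarities of ratio 1/2 determined by the zipper conditions — form a zipper whose attractor is the Sierpinski gasket with vertices (0,0), (1,0), (1/2, √3/2). -/

import Mathlib

open Set

/-- `K` is the attractor (invariant nonempty compact set) of the system `S`. -/
def IsAttractor {X : Type*} [MetricSpace X] {m : ℕ} (S : Fin m → X → X) (K : Set X) : Prop :=
  K.Nonempty ∧ IsCompact K ∧ K = ⋃ i, S i '' K

/-- `S` is a zipper with vertices `z 0, …, z m` and signature `ε ∈ {0,1}^m`: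
a system of injective contractions with `S j (z 0) = z (j + ε j)` and
`S j (z m) = z (j + 1 - ε j)` (0-based indexing of the maps). -/
def IsZipper {X : Type*} [MetricSpace X] {m : ℕ} (S : Fin m → X → X)
    (z : ℕ → X) (ε : Fin m → ℕ) : Prop :=
  (∀ j, ε j ≤ 1) ∧
  (∀ j, Function.Injective (S j)) ∧
  (∀ j, ∃ r : NNReal, ContractingWith r (S j)) ∧
  (∀ j : Fin m, S j (z 0) = z (j.val + ε j)) ∧
  (∀ j : Fin m, S j (z m) = z (j.val + 1 - ε j))

/-- The affine maps `T i` of the zipper `S_{P,ε}` on `[0,1]` associated to a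
partition `x` and signature `ε`. -/
def zipT {m : ℕ} (x : ℕ → ℝ) (ε : Fin m → ℕ) (i : Fin m) : ℝ → ℝ :=
  fun t => x (i.val + ε i) * (1 - t) + x (i.val + 1 - ε i) * t
/-- Vertices of the gasket zipper: `(0,0)`, `(1/4,√3/4)`, `(3/4,√3/4)`, `(1,0)`,
in the plane `ℝ² ≃ ℂ`. -/
noncomputable def gVert : ℕ → ℂ
  | 0 => 0
  | 1 => 1 / 4 + (Real.sqrt 3 / 4) * Complex.I
  | 2 => 3 / 4 + (Real.sqrt 3 / 4) * Complex.I
  | _ => 1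

/-- The three direct similarities of ratio `1/2` determined by the zipper
conditions with vertices `gVert` and signature `(1,0,1)`. -/
noncomputable def gZip : Fin 3 → ℂ → ℂ :=
  ![fun w => gVert 1 * (1 - w),
    fun w => w / 2 + gVert 1,
    fun w => (gVert 2 - 1) * w + 1]

/-- The three homotheties of ratio `1/2` centered at `(0,0)`, `(1,0)`,
`(1/2,√3/2)`, whose attractor is the Sierpinski gasket. -/
noncomputable def gasketMaps : Fin 3 → ℂ → ℂ :=
  ![fun w => w / 2,
    fun w => w / 2 + 1 / 2,
    fun w => w / 2 + (1 / 4 + (Real.sqrt 3 / 4) * Complex.I)]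

/- ====================  Auxiliary material  ==================== -/

/-- Uniqueness of the attractor of a system of `1/2`-Lipschitz maps. -/
lemma attractor_unique {m : ℕ} {f : Fin m → ℂ → ℂ} (hf : ∀ i, LipschitzWith (1/2) (f i))
    {K L : Set ℂ} (hK : IsAttractor f K) (hL : IsAttractor f L) : K = L := by
  obtain ⟨hKne, hKc, hKeq⟩ := hK
  obtain ⟨hLne, hLc, hLeq⟩ := hL
  set d := EMetric.hausdorffEdist K L with hd
  have hdtop : d ≠ ⊤ := Metric.hausdorffEdist_ne_top_of_nonempty_of_bounded hKne hLne
    hKc.isBounded hLc.isBounded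
  have h2 : EMetric.hausdorffEdist (⋃ i, f i '' K) (⋃ i, f i '' L) ≤ d / 2 := by
    apply EMetric.hausdorffEdist_le_of_mem_edist
    · rintro x hx
      simp only [mem_iUnion, mem_image] at hx
      obtain ⟨i, k, hk, rfl⟩ := hx
      have h1 : EMetric.infEdist k L ≤ d := EMetric.infEdist_le_hausdorffEdist_of_mem hk
      obtain ⟨l, hl, hle⟩ := hLc.exists_infEdist_eq_edist hLne k
      refine ⟨f i l, by simp only [mem_iUnion, mem_image]; exact ⟨i, l, hl, rfl⟩, ?_⟩
      calc edist (f i k) (f i l) ≤ (((1:NNReal)/2 : NNReal) : ENNReal) * edist k l :=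
            (hf i).edist_le_mul k l
        _ ≤ (((1:NNReal)/2 : NNReal) : ENNReal) * d := by gcongr; rw [← hle]; exact h1
        _ = d / 2 := by rw [ENNReal.div_eq_inv_mul]; norm_num
    · rintro x hx
      simp only [mem_iUnion, mem_image] at hx
      obtain ⟨i, l, hl, rfl⟩ := hx
      have h1 : EMetric.infEdist l K ≤ d := by
        rw [hd, EMetric.hausdorffEdist, EMetric.hausdorffEdist_comm]
        exact EMetric.infEdist_le_hausdorffEdist_of_mem hl
      obtain ⟨k, hk, hle⟩ := hKc.exists_infEdist_eq_edist hKne l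
      refine ⟨f i k, by simp only [mem_iUnion, mem_image]; exact ⟨i, k, hk, rfl⟩, ?_⟩
      calc edist (f i l) (f i k) ≤ (((1:NNReal)/2 : NNReal) : ENNReal) * edist l k :=
            (hf i).edist_le_mul l k
        _ ≤ (((1:NNReal)/2 : NNReal) : ENNReal) * d := by gcongr; rw [← hle]; exact h1
        _ = d / 2 := by rw [ENNReal.div_eq_inv_mul]; norm_num
  have key : d ≤ d / 2 := by
    calc d = EMetric.hausdorffEdist (⋃ i, f i '' K) (⋃ i, f i '' L) := by
          rw [hd, ← hKeq, ← hLeq]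
      _ ≤ d / 2 := h2
  have hd0 : d = 0 := by
    by_contra h
    exact absurd key (not_le.mpr (ENNReal.half_lt_self h hdtop))
  have := EMetric.hausdorffEdist_zero_iff_closure_eq_closure.mp hd0
  rwa [hKc.isClosed.closure_eq, hLc.isClosed.closure_eq] at this

/-- The rotation by `120°` permuting the vertices `0`, `1`, `(1/2,√3/2)`. -/
noncomputable def grot : ℂ → ℂ := fun w => (1/2 + ((Real.sqrt 3:ℝ) / 2) * Complex.I) * (1 - w)

lemma h3 : ((Real.sqrt 3 : ℝ) : ℂ) * ((Real.sqrt 3 : ℝ) : ℂ) = 3 := by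
  rw [← Complex.ofReal_mul, Real.mul_self_sqrt (by norm_num)]
  norm_num

lemma union3 (s : Fin 3 → Set ℂ) : (⋃ i, s i) = s 0 ∪ (s 1 ∪ s 2) := by
  ext x
  simp only [mem_iUnion, mem_union]
  constructor
  · rintro ⟨i, h⟩; fin_cases i <;> tauto
  · rintro (h | h | h)
    exacts [⟨0, h⟩, ⟨1, h⟩, ⟨2, h⟩]

lemma conj0 : ∀ w, grot (gasketMaps 0 w) = gasketMaps 2 (grot w) := by
  intro w
  show (1/2 + ((Real.sqrt 3:ℝ)/2)*Complex.I) * (1 - w/2)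
    = (1/2 + ((Real.sqrt 3:ℝ)/2)*Complex.I) * (1 - w) / 2 + (1/4 + ((Real.sqrt 3:ℝ)/4)*Complex.I)
  ring

lemma conj1 : ∀ w, grot (gasketMaps 1 w) = gasketMaps 0 (grot w) := by
  intro w
  show (1/2 + ((Real.sqrt 3:ℝ)/2)*Complex.I) * (1 - (w/2 + 1/2))
    = (1/2 + ((Real.sqrt 3:ℝ)/2)*Complex.I) * (1 - w) / 2
  ring

lemma conj2 : ∀ w, grot (gasketMaps 2 w) = gasketMaps 1 (grot w) := by
  intro w
  show (1/2 + ((Real.sqrt 3:ℝ)/2)*Complex.I) * (1 - (w/2 + (1/4 + ((Real.sqrt 3:ℝ)/4)*Complex.I)))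
    = (1/2 + ((Real.sqrt 3:ℝ)/2)*Complex.I) * (1 - w) / 2 + 1/2
  linear_combination (-(Complex.I^2)/8) * h3 + (-3/8) * Complex.I_sq

lemma grot_cont : Continuous grot :=
  continuous_const.mul (continuous_const.sub continuous_id)

lemma zip0 : ∀ w, gZip 0 w = gasketMaps 0 (grot w) := by
  intro w
  show gVert 1 * (1 - w) = (1/2 + ((Real.sqrt 3:ℝ)/2)*Complex.I) * (1 - w) / 2
  show (1/4 + ((Real.sqrt 3:ℝ)/4)*Complex.I) * (1 - w) = _
  ring

lemma zip1 : ∀ w, gZip 1 w = gasketMaps 2 w := fun _ => rfl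

lemma zip2 : ∀ w, gZip 2 w = gasketMaps 1 (grot (grot w)) := by
  intro w
  show (gVert 2 - 1) * w + 1
    = (1/2 + ((Real.sqrt 3:ℝ)/2)*Complex.I) *
        (1 - (1/2 + ((Real.sqrt 3:ℝ)/2)*Complex.I) * (1 - w)) / 2 + 1/2
  show (3/4 + ((Real.sqrt 3:ℝ)/4)*Complex.I - 1) * w + 1 = _
  linear_combination ((1-w)*Complex.I^2/8) * h3 + ((1-w)*3/8) * Complex.I_sq

lemma dist_affine (a b p q : ℂ) : dist (a*p+b) (a*q+b) = ‖a‖ * dist p q := by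
  rw [Complex.dist_eq, Complex.dist_eq, show a*p+b - (a*q+b) = a*(p-q) by ring, norm_mul]

lemma abs_half {a b : ℝ} (h : a^2 + b^2 = 1/4) :
    ‖(a : ℂ) + (b:ℂ) * Complex.I‖ = 1/2 := by
  rw [Complex.norm_def, Complex.normSq_apply]
  simp only [Complex.add_re, Complex.ofReal_re, Complex.mul_re, Complex.I_re, Complex.I_im,
    Complex.ofReal_im, Complex.add_im, Complex.mul_im]
  rw [show (1:ℝ)/2 = Real.sqrt (1/4) by
    rw [show (1:ℝ)/4 = (1/2)^2 by norm_num, Real.sqrt_sq (by norm_num)]]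
  congr 1
  nlinarith

lemma abs_gv1 : ‖gVert 1‖ = 1/2 := by
  have := abs_half (a := 1/4) (b := Real.sqrt 3 / 4)
    (by nlinarith [Real.sq_sqrt (show (0:ℝ) ≤ 3 by norm_num)])
  show ‖(1 / 4 + (Real.sqrt 3 / 4) * Complex.I : ℂ)‖ = 1/2
  convert this using 2
  push_cast; ring

lemma abs_gv2 : ‖gVert 2 - 1‖ = 1/2 := by
  have := abs_half (a := -(1/4)) (b := Real.sqrt 3 / 4)
    (by nlinarith [Real.sq_sqrt (show (0:ℝ) ≤ 3 by norm_num)])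
  rw [show (gVert 2 - 1 : ℂ)
    = ((-(1/4) : ℝ) : ℂ) + ((Real.sqrt 3 / 4 : ℝ):ℂ) * Complex.I by
      show (3/4 + (Real.sqrt 3/4) * Complex.I - 1 : ℂ) = _; push_cast; ring]
  exact this

lemma gdist : ∀ i, ∀ p q : ℂ, dist (gZip i p) (gZip i q) = dist p q / 2 := by
  intro i p q
  fin_cases i
  · show dist (gVert 1 * (1 - p)) (gVert 1 * (1 - q)) = dist p q / 2
    rw [show gVert 1 * (1-p) = (-gVert 1) * p + gVert 1 by ring,
        show gVert 1 * (1-q) = (-gVert 1) * q + gVert 1 by ring,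
        dist_affine, norm_neg, abs_gv1]
    ring
  · show dist (p / 2 + gVert 1) (q / 2 + gVert 1) = dist p q / 2
    rw [show p/2 + gVert 1 = (1/2) * p + gVert 1 by ring,
        show q/2 + gVert 1 = (1/2) * q + gVert 1 by ring, dist_affine,
        show ‖(1/2 : ℂ)‖ = 1/2 by norm_num]
    ring
  · show dist ((gVert 2 - 1) * p + 1) ((gVert 2 - 1) * q + 1) = dist p q / 2
    rw [dist_affine, abs_gv2]; ring

lemma gasket_lip : ∀ i, LipschitzWith (1/2) (gasketMaps i) := by
  have key : ∀ t p q : ℂ, dist (p/2 + t) (q/2 + t) ≤ ((1/2 : NNReal) : ℝ) * dist p q := by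
    intro t p q
    rw [show p/2 + t = (1/2) * p + t by ring, show q/2 + t = (1/2) * q + t by ring, dist_affine]
    norm_num
  intro i
  apply LipschitzWith.of_dist_le_mul
  intro p q
  fin_cases i
  · show dist (p/2) (q/2) ≤ _
    simpa using key 0 p q
  · exact key _ p q
  · exact key _ p q

/-- The gasket is invariant under the rotation `grot`. -/
lemma grot_fix {K : Set ℂ} (h : IsAttractor gasketMaps K) : grot '' K = K := by
  obtain ⟨hne, hc, heq⟩ := h
  apply attractor_unique gasket_lip _ ⟨hne, hc, heq⟩
  refine ⟨hne.image grot, hc.image grot_cont, ?_⟩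
  calc grot '' K = grot '' ⋃ i, gasketMaps i '' K := by rw [← heq]
    _ = ⋃ i, grot '' (gasketMaps i '' K) := image_iUnion
    _ = ⋃ i, gasketMaps i '' (grot '' K) := by
        rw [union3, union3]
        rw [← image_comp, ← image_comp, ← image_comp,
            ← image_comp, ← image_comp, ← image_comp]
        rw [show grot ∘ gasketMaps 0 = gasketMaps 2 ∘ grot from funext conj0,
            show grot ∘ gasketMaps 1 = gasketMaps 0 ∘ grot from funext conj1,
            show grot ∘ gasketMaps 2 = gasketMaps 1 ∘ grot from funext conj2]
        ext x
        simp only [mem_union]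
        tauto

/-- The maps `gZip` are similarities of ratio `1/2` forming a zipper with
vertices `(0,0),(1/4,√3/4),(3/4,√3/4),(1,0)` and signature `(1,0,1)`, whose
attractor is the Sierpinski gasket with vertices `(0,0),(1,0),(1/2,√3/2)`. -/
theorem stmt6 (K : Set ℂ) (hgasket : IsAttractor gasketMaps K) :
    (∀ i, ∀ p q : ℂ, dist (gZip i p) (gZip i q) = dist p q / 2) ∧
    IsZipper gZip gVert ![1, 0, 1] ∧
    IsAttractor gZip K := by
  refine ⟨gdist, ⟨?_, ?_, ?_, ?_, ?_⟩, ?_⟩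
  · intro j; fin_cases j <;> norm_num
  · intro j p q hpq
    have h := gdist j p q
    rw [hpq, dist_self] at h
    have : dist p q = 0 := by linarith
    exact dist_eq_zero.mp this
  · intro j
    refine ⟨1/2, by apply NNReal.coe_lt_coe.mp; push_cast; norm_num, LipschitzWith.of_dist_le_mul fun p q => ?_⟩
    rw [gdist j p q]
    push_cast
    ring_nf
    rfl
  · intro j
    fin_cases j
    · show gVert 1 * (1 - gVert 0) = gVert 1
      show gVert 1 * (1 - 0) = gVert 1; ring
    · show gVert 0 / 2 + gVert 1 = gVert 1
      show (0:ℂ) / 2 + gVert 1 = gVert 1; ring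
    · show (gVert 2 - 1) * gVert 0 + 1 = gVert 3
      show (gVert 2 - 1) * 0 + 1 = (1:ℂ); ring
  · intro j
    fin_cases j
    · show gVert 1 * (1 - gVert 3) = gVert 0
      show gVert 1 * (1 - 1) = (0:ℂ); ring
    · show gVert 3 / 2 + gVert 1 = gVert 2
      show (1:ℂ) / 2 + (1/4 + (Real.sqrt 3/4) * Complex.I) = 3/4 + (Real.sqrt 3/4) * Complex.I
      ring
    · show (gVert 2 - 1) * gVert 3 + 1 = gVert 2
      show (gVert 2 - 1) * 1 + 1 = gVert 2; ring
  · obtain ⟨hne, hc, heq⟩ := hgasket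
    have hfix : grot '' K = K := grot_fix ⟨hne, hc, heq⟩
    refine ⟨hne, hc, ?_⟩
    rw [union3]
    rw [show gZip 0 = gasketMaps 0 ∘ grot from funext zip0,
        show gZip 1 = gasketMaps 2 from funext zip1,
        show gZip 2 = gasketMaps 1 ∘ (grot ∘ grot) from funext zip2]
    simp only [image_comp, hfix]
    rw [union3 (fun i => gasketMaps i '' K)] at heq
    conv_lhs => rw [heq]
    ext x; simp only [mem_union]; tauto
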